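/- Define c : ℕ → ℕ → ℝ by c(2,0) = c(2,1) = 1/2, c(2,i) = 0 for i ≥ 2, and for n ≥ 3: c(n,0) = 1/2, c(n,i) = ((n-2)/n)·c(n-1,i) + (1/n)·c(n-1,i-1) for i ≥ 1. Then for every fixed i ≥ 0, lim_{n→∞} c(n,i) = (1/2)^{i+1}. -/

import Mathlib

open Finset Filter
open Asymptotics

/-- The children-distribution recurrence: `c 2 0 = c 2 1 = 1/2`, `c 2 i = 0` for
`i ≥ 2`, and for `n ≥ 3`: `c n 0 = 1/2` and
`c n i = ((n-2)/n)·c (n-1) i + (1/n)·c (n-1) (i-1)` for `i ≥ 1`. -/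
noncomputable def c : ℕ → ℕ → ℝ
  | 0, _ => 0
  | 1, _ => 0
  | 2, 0 => 1 / 2
  | 2, 1 => 1 / 2
  | 2, _ + 2 => 0
  | _ + 3, 0 => 1 / 2
  | n + 3, i + 1 =>
      (((n : ℝ) + 1) / ((n : ℝ) + 3)) * c (n + 2) (i + 1)
        + (1 / ((n : ℝ) + 3)) * c (n + 2) i

lemma c_zero (n : ℕ) (hn : 2 ≤ n) : c n 0 = 1 / 2 := by
  obtain ⟨k, rfl⟩ := Nat.exists_eq_add_of_le hn
  match k with
  | 0 => rfl
  | k + 1 => rw [show 2 + (k + 1) = k + 3 from by omega]; rfl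

lemma tendsto_quad : Tendsto (fun n : ℕ => (n : ℝ) * ((n : ℝ) - 1)) atTop atTop := by
  apply Tendsto.atTop_mul_atTop₀ tendsto_natCast_atTop_atTop
  exact tendsto_atTop_add_const_right _ _ tendsto_natCast_atTop_atTop

lemma sum_id (n : ℕ) : ∑ m ∈ range n, (m : ℝ) = (n : ℝ) * ((n : ℝ) - 1) / 2 := by
  induction n with
  | zero => simp
  | succ n ih => rw [Finset.sum_range_succ, ih]; push_cast; ring

/-- weighted Cesàro -/
lemma cesaro_weighted {a : ℕ → ℝ} {L : ℝ} (h : Tendsto a atTop (nhds L)) :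
    Tendsto (fun n : ℕ => (∑ m ∈ range n, (m : ℝ) * a m) / ((n : ℝ) * ((n : ℝ) - 1)))
      atTop (nhds (L / 2)) := by
  have hg : Tendsto (fun n : ℕ => ∑ m ∈ range n, (m : ℝ)) atTop atTop := by
    simp only [sum_id]
    exact tendsto_quad.atTop_div_const two_pos
  have hf : (fun m : ℕ => (m : ℝ) * (a m - L)) =o[atTop] (fun m : ℕ => (m : ℝ)) := by
    rw [isLittleO_iff_tendsto']
    · have : Tendsto (fun m : ℕ => a m - L) atTop (nhds 0) := by
        simpa using h.sub_const L
      apply this.congr'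
      filter_upwards [eventually_gt_atTop 0] with m hm
      have : (m : ℝ) ≠ 0 := by positivity
      field_simp
    · filter_upwards [eventually_gt_atTop 0] with m hm h0
      exact absurd h0 (by positivity)
  have hso := hf.sum_range (fun i => Nat.cast_nonneg i) hg
  have hratio : Tendsto (fun n : ℕ =>
      (∑ m ∈ range n, (m : ℝ) * (a m - L)) / (∑ m ∈ range n, (m : ℝ))) atTop (nhds 0) := by
    rw [isLittleO_iff_tendsto'] at hso
    · exact hso
    · filter_upwards [eventually_ge_atTop 2] with n hn h0
      rw [sum_id] at h0
      have h1 : (2 : ℝ) ≤ (n : ℝ) := by exact_mod_cast hn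
      have : (0:ℝ) < (n : ℝ) * ((n : ℝ) - 1) / 2 := by nlinarith
      exact absurd h0 this.ne'
  have key : Tendsto (fun n : ℕ =>
      (∑ m ∈ range n, (m : ℝ) * (a m - L)) / (∑ m ∈ range n, (m : ℝ)) * (1 / 2) + L / 2)
      atTop (nhds (0 * (1 / 2) + L / 2)) := (hratio.mul_const _).add_const _
  rw [show (0 : ℝ) * (1 / 2) + L / 2 = L / 2 by ring] at key
  apply key.congr'
  filter_upwards [eventually_ge_atTop 2] with n hn
  have h1 : (2 : ℝ) ≤ (n : ℝ) := by exact_mod_cast hn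
  have hd : (n : ℝ) * ((n : ℝ) - 1) ≠ 0 := by nlinarith
  have hsplit : ∑ m ∈ range n, (m : ℝ) * a m
      = (∑ m ∈ range n, (m : ℝ) * (a m - L)) + L * ((n : ℝ) * ((n : ℝ) - 1) / 2) := by
    rw [← sum_id n, Finset.mul_sum, ← Finset.sum_add_distrib]
    congr 1; ext m; ring
  rw [sum_id, hsplit]
  have hn1 : (n : ℝ) - 1 ≠ 0 := by linarith
  field_simp

lemma closed_form (i : ℕ) : ∀ n : ℕ, 2 ≤ n →
    (n : ℝ) * ((n : ℝ) - 1) * c n (i + 1)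
      = 2 * c 2 (i + 1) + ∑ m ∈ Finset.Ico 2 n, (m : ℝ) * c m i := by
  intro n hn
  induction n, hn using Nat.le_induction with
  | base => norm_num
  | succ n hn ih =>
    obtain ⟨k, rfl⟩ := Nat.exists_eq_add_of_le hn
    rw [show 2 + k + 1 = k + 3 from by omega] at *
    rw [show 2 + k = k + 2 from by omega] at *
    rw [show c (k + 3) (i + 1) = (((k : ℝ) + 1) / ((k : ℝ) + 3)) * c (k + 2) (i + 1)
          + (1 / ((k : ℝ) + 3)) * c (k + 2) i from rfl]
    rw [show k + 3 = (k + 2) + 1 from rfl, Finset.sum_Ico_succ_top (by omega)]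
    push_cast at ih ⊢
    rw [← add_assoc, ← ih]
    have h3 : (k : ℝ) + 3 ≠ 0 := by positivity
    field_simp
    ring

/-- for every fixed `i ≥ 0`, `lim_{n→∞} c(n,i) = (1/2)^{i+1}`:
the number of children is asymptotically geometric with parameter `1/2`. -/
theorem children_tendsto_geometric (i : ℕ) :
    Tendsto (fun n : ℕ => c n i) atTop (nhds ((1 / 2 : ℝ) ^ (i + 1))) := by
  induction i with
  | zero =>
    rw [show ((1 / 2 : ℝ)) ^ (0 + 1) = 1 / 2 by norm_num]
    apply tendsto_const_nhds.congr'
    filter_upwards [eventually_ge_atTop 2] with n hn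
    exact (c_zero n hn).symm
  | succ i ih =>
    have hS := cesaro_weighted ih
    have hK : Tendsto (fun n : ℕ => 2 * c 2 (i + 1) / ((n : ℝ) * ((n : ℝ) - 1)))
        atTop (nhds 0) := Tendsto.div_atTop tendsto_const_nhds tendsto_quad
    have key := hK.add hS
    rw [zero_add] at key
    rw [show ((1 / 2 : ℝ)) ^ (i + 1 + 1) = ((1 / 2 : ℝ) ^ (i + 1)) / 2 by ring]
    apply key.congr'
    filter_upwards [eventually_ge_atTop 2] with n hn
    have h1 : (2 : ℝ) ≤ (n : ℝ) := by exact_mod_cast hn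
    have hd : (n : ℝ) * ((n : ℝ) - 1) ≠ 0 := by nlinarith
    have hsum : ∑ m ∈ range n, (m : ℝ) * c m i = ∑ m ∈ Finset.Ico 2 n, (m : ℝ) * c m i := by
      rw [Finset.range_eq_Ico, ← Finset.sum_Ico_consecutive _ (by norm_num : (0:ℕ) ≤ 2) hn]
      have : ∑ m ∈ Finset.Ico (0:ℕ) 2, (m : ℝ) * c m i = 0 := by
        rw [show Finset.Ico (0:ℕ) 2 = {0, 1} from rfl]
        simp [show c 1 i = 0 from rfl]
      rw [this, zero_add]
    have := closed_form i n hn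
    rw [hsum]
    have hn1 : (n : ℝ) - 1 ≠ 0 := by linarith
    field_simp
    linear_combination (-1 : ℝ) * this
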